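/- Let U ⊂ ℝ^d and let π : U → ℝ be Lipschitz continuous. Suppose that for every y ∈ U there exists δ > 0 such that Φ(y,0,σ) ∈ U and π(Φ(y,0,σ)) = π(y) - σ for all σ ∈ [0,δ). Then at every point x ∈ U at which π is differentiable, ‖∇π(x)‖ ≥ 1/M. -/

import Mathlib

open MeasureTheory Real Set
open scoped NNReal

noncomputable section

/-- The state space `ℝ^d`. -/
abbrev EucS (d : ℕ) := EuclideanSpace ℝ (Fin d)

/-- Let `U ⊂ ℝ^d` and `π : U → ℝ` be Lipschitz continuous. If for every
`y ∈ U` there is `δ > 0` with `Φ(y,0,σ) ∈ U` and `π(Φ(y,0,σ)) = π(y) - σ` for all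
`σ ∈ [0,δ)`, then at every `x ∈ U` at which `π` is differentiable, `‖∇π(x)‖ ≥ 1/M`. -/
theorem gradient_lower_bound_along_flow
    (d : ℕ) (M L : ℝ) (hM : 0 < M) (hL : 0 < L)
    (b : EucS d → ℝ → EucS d)
    (hbc : Continuous fun z : EucS d × ℝ => b z.1 z.2)
    (hbM : ∀ x t, ‖b x t‖ ≤ M)
    (hbL : ∀ x y t, ‖b x t - b y t‖ ≤ L * ‖x - y‖)
    (Φ : EucS d → ℝ → ℝ → EucS d)
    (hΦ : ∀ x t s, t ≤ s → Φ x t s = x + ∫ σ in t..s, b (Φ x t σ) σ)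
    (U : Set (EucS d)) (pit : EucS d → ℝ)
    (K : ℝ≥0) (hπL : LipschitzOnWith K pit U)
    (hflow : ∀ y ∈ U, ∃ δ > 0, ∀ σ, 0 ≤ σ → σ < δ →
      Φ y 0 σ ∈ U ∧ pit (Φ y 0 σ) = pit y - σ) :
    ∀ x ∈ U, DifferentiableAt ℝ pit x → 1 / M ≤ ‖gradient pit x‖ := by
  intro x hx hdiff
  have hg : HasFDerivAt pit (fderiv ℝ pit x) x := hdiff.hasFDerivAt
  set g := fderiv ℝ pit x with hgdef
  have hnorm : ‖gradient pit x‖ = ‖g‖ := by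
    rw [gradient]
    exact (LinearIsometryEquiv.norm_map _ _)
  rw [hnorm, div_le_iff₀ hM]
  -- flow bound
  have hbound : ∀ σ : ℝ, 0 ≤ σ → ‖Φ x 0 σ - x‖ ≤ M * σ := by
    intro σ hσ
    rw [hΦ x 0 σ hσ, add_sub_cancel_left]
    have h := intervalIntegral.norm_integral_le_of_norm_le_const
      (a := (0:ℝ)) (b := σ) (C := M) (f := fun t => b (Φ x 0 t) t)
      (fun t _ => hbM (Φ x 0 t) t)
    simpa [abs_of_nonneg hσ] using h
  have key : ∀ ε : ℝ, 0 < ε → 1 ≤ ‖g‖ * M + ε * M := by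
    intro ε hε
    have ho := hg.isLittleO.def hε
    obtain ⟨δ₁, hδ₁pos, hδ₁⟩ := Metric.eventually_nhds_iff.mp ho
    obtain ⟨δ₂, hδ₂pos, hflow'⟩ := hflow x hx
    set σ := min (δ₂ / 2) (δ₁ / (2 * M)) with hσdef
    have hσpos : 0 < σ := lt_min (by positivity) (by positivity)
    have hσδ₂ : σ < δ₂ := lt_of_le_of_lt (min_le_left _ _) (by linarith)
    have hMσ : M * σ < δ₁ := by
      have : σ ≤ δ₁ / (2 * M) := min_le_right _ _
      have h2 := (le_div_iff₀ (by positivity : (0:ℝ) < 2 * M)).mp this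
      nlinarith
    obtain ⟨hΦU, hπval⟩ := hflow' σ hσpos.le hσδ₂
    have hdist : dist (Φ x 0 σ) x < δ₁ :=
      lt_of_le_of_lt (by simpa [dist_eq_norm] using hbound σ hσpos.le) hMσ
    have hlo : ‖pit (Φ x 0 σ) - pit x - g (Φ x 0 σ - x)‖ ≤ ε * ‖Φ x 0 σ - x‖ :=
      hδ₁ hdist
    have hgb : ‖g (Φ x 0 σ - x)‖ ≤ ‖g‖ * (M * σ) :=
      le_trans (g.le_opNorm _) (by
        have := hbound σ hσpos.le
        exact mul_le_mul_of_nonneg_left this (norm_nonneg g))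
    have heq : pit (Φ x 0 σ) - pit x = -σ := by rw [hπval]; ring
    have hσle : σ ≤ ε * (M * σ) + ‖g‖ * (M * σ) := by
      have h1 : σ = ‖pit (Φ x 0 σ) - pit x‖ := by
        rw [heq, norm_neg, Real.norm_eq_abs, abs_of_nonneg hσpos.le]
      have h2 : ‖pit (Φ x 0 σ) - pit x‖ ≤
          ‖pit (Φ x 0 σ) - pit x - g (Φ x 0 σ - x)‖ + ‖g (Φ x 0 σ - x)‖ := by
        calc ‖pit (Φ x 0 σ) - pit x‖
            = ‖(pit (Φ x 0 σ) - pit x - g (Φ x 0 σ - x)) + g (Φ x 0 σ - x)‖ := by ring_nf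
          _ ≤ _ := norm_add_le _ _
      have h3 : ε * ‖Φ x 0 σ - x‖ ≤ ε * (M * σ) :=
        mul_le_mul_of_nonneg_left (hbound σ hσpos.le) hε.le
      linarith
    nlinarith [hσpos]
  by_contra h
  push_neg at h
  have hε : (1 - ‖g‖ * M) / (2 * M) > 0 := div_pos (by linarith) (by positivity)
  have := key _ hε
  have h2 : (1 - ‖g‖ * M) / (2 * M) * M = (1 - ‖g‖ * M) / 2 := by
    field_simp
  rw [h2] at this
  linarith
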